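/- Let H₁₁ be a d×d Hermitian complex matrix, H₁₂ a d×q complex matrix, and H₂₂ a q×q Hermitian complex matrix. Let λ ≤ λ' be real numbers such that every eigenvalue χ of H₂₂ satisfies χ < λ or χ > λ' (so both H₂₂ − λ·1 and H₂₂ − λ'·1 are invertible). Define H_eff(μ) = H₁₁ − H₁₂ · (H₂₂ − μ·1)⁻¹ · H₁₂ᴴ. Then H_eff(λ) − H_eff(λ') is positive semidefinite; i.e., the effective Hamiltonian is operator-monotonically nonincreasing on every interval free of eigenvalues of H₂₂. -/

import Mathlib

open Matrix
open scoped ComplexOrder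

private lemma inv_shift_eq {q : ℕ} (H₂₂ : Matrix (Fin q) (Fin q) ℂ)
    (hH₂₂ : H₂₂.IsHermitian) (μ : ℝ) (hμ : ∀ i, hH₂₂.eigenvalues i ≠ μ) :
    (H₂₂ - (μ : ℂ) • 1)⁻¹ =
      (hH₂₂.eigenvectorUnitary : Matrix (Fin q) (Fin q) ℂ) *
        diagonal (fun i => ((hH₂₂.eigenvalues i : ℂ) - μ)⁻¹) *
        star (hH₂₂.eigenvectorUnitary : Matrix (Fin q) (Fin q) ℂ) := by
  set U : Matrix (Fin q) (Fin q) ℂ := (hH₂₂.eigenvectorUnitary : Matrix (Fin q) (Fin q) ℂ)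
  have hUU : U * star U = 1 := (Matrix.mem_unitaryGroup_iff).mp hH₂₂.eigenvectorUnitary.2
  have hUU' : star U * U = 1 := (Matrix.mem_unitaryGroup_iff').mp hH₂₂.eigenvectorUnitary.2
  have hne : ∀ i, ((hH₂₂.eigenvalues i : ℂ) - μ) ≠ 0 := by
    intro i h
    exact hμ i (by exact_mod_cast sub_eq_zero.mp h)
  have hfact : H₂₂ - (μ : ℂ) • 1 =
      U * diagonal (fun i => (hH₂₂.eigenvalues i : ℂ) - μ) * star U := by
    conv_lhs => rw [hH₂₂.spectral_theorem, Unitary.conjStarAlgAut_apply]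
    have h1 : ((μ : ℂ) • 1 : Matrix (Fin q) (Fin q) ℂ) =
        U * diagonal (fun _ => (μ : ℂ)) * star U := by
      rw [← Matrix.smul_one_eq_diagonal]
      rw [Matrix.mul_smul, Matrix.smul_mul, mul_one, hUU]
    rw [h1, ← Matrix.sub_mul, ← Matrix.mul_sub, Matrix.diagonal_sub]
    rfl
  rw [hfact]
  apply Matrix.inv_eq_right_inv
  calc U * diagonal (fun i => (hH₂₂.eigenvalues i : ℂ) - μ) * star U *
        (U * diagonal (fun i => ((hH₂₂.eigenvalues i : ℂ) - μ)⁻¹) * star U)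
      = U * (diagonal (fun i => (hH₂₂.eigenvalues i : ℂ) - μ) * ((star U * U) *
          diagonal (fun i => ((hH₂₂.eigenvalues i : ℂ) - μ)⁻¹))) * star U := by
        simp only [Matrix.mul_assoc]
    _ = 1 := by
        rw [hUU', one_mul, Matrix.diagonal_mul_diagonal]
        have : (fun i => ((hH₂₂.eigenvalues i : ℂ) - μ) * ((hH₂₂.eigenvalues i : ℂ) - μ)⁻¹)
            = fun _ => (1 : ℂ) := by
          funext i; exact mul_inv_cancel₀ (hne i)
        rw [this, Matrix.diagonal_one, mul_one, hUU]

/-- **Operator monotonicity of the effective Hamiltonian.**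
Let `H₁₁` and `H₂₂` be Hermitian and let `λ ≤ λ'` be real numbers such that every eigenvalue `χ`
of `H₂₂` satisfies `χ < λ` or `χ > λ'`. Then `H_eff(λ) - H_eff(λ')` is positive semidefinite,
where `H_eff(μ) = H₁₁ - H₁₂ (H₂₂ - μ•1)⁻¹ H₁₂ᴴ`; i.e. the effective Hamiltonian is
operator-monotonically nonincreasing on intervals free of eigenvalues of `H₂₂`. -/
theorem effective_hamiltonian_monotone
    (d q : ℕ)
    (H₁₁ : Matrix (Fin d) (Fin d) ℂ) (hH₁₁ : H₁₁.IsHermitian)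
    (H₁₂ : Matrix (Fin d) (Fin q) ℂ)
    (H₂₂ : Matrix (Fin q) (Fin q) ℂ) (hH₂₂ : H₂₂.IsHermitian)
    (lam lam' : ℝ) (hle : lam ≤ lam')
    (hspec : ∀ i, hH₂₂.eigenvalues i < lam ∨ lam' < hH₂₂.eigenvalues i) :
    ((H₁₁ - H₁₂ * (H₂₂ - (lam : ℂ) • 1)⁻¹ * H₁₂ᴴ)
      - (H₁₁ - H₁₂ * (H₂₂ - (lam' : ℂ) • 1)⁻¹ * H₁₂ᴴ)).PosSemidef := by
  set U : Matrix (Fin q) (Fin q) ℂ := (hH₂₂.eigenvectorUnitary : Matrix (Fin q) (Fin q) ℂ)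
  set χ : Fin q → ℝ := hH₂₂.eigenvalues
  have hne : ∀ i, χ i ≠ lam := fun i => (hspec i).elim ne_of_lt
    (fun h => ne_of_gt (lt_of_le_of_lt hle h))
  have hne' : ∀ i, χ i ≠ lam' := fun i => (hspec i).elim
    (fun h => ne_of_lt (lt_of_lt_of_le h hle)) ne_of_gt
  have h1 := inv_shift_eq H₂₂ hH₂₂ lam hne
  have h2 := inv_shift_eq H₂₂ hH₂₂ lam' hne'
  set g : Fin q → ℂ := fun i => ((χ i : ℂ) - lam')⁻¹ - ((χ i : ℂ) - lam)⁻¹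
  have key : ((H₁₁ - H₁₂ * (H₂₂ - (lam : ℂ) • 1)⁻¹ * H₁₂ᴴ)
      - (H₁₁ - H₁₂ * (H₂₂ - (lam' : ℂ) • 1)⁻¹ * H₁₂ᴴ))
      = (H₁₂ * U) * diagonal g * (H₁₂ * U)ᴴ := by
    rw [h1, h2]
    have hdg : diagonal g = diagonal (fun i => ((χ i : ℂ) - lam')⁻¹)
        - diagonal (fun i => ((χ i : ℂ) - lam)⁻¹) := by
      rw [← Matrix.diagonal_sub]
    rw [hdg, Matrix.conjTranspose_mul]
    have hsU : Uᴴ = star U := rfl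
    rw [hsU]
    simp only [Matrix.mul_sub, Matrix.sub_mul, Matrix.mul_assoc]
    abel
  rw [key]
  apply Matrix.PosSemidef.mul_mul_conjTranspose_same
  rw [Matrix.posSemidef_diagonal_iff]
  intro i
  have hreal : ((χ i - lam')⁻¹ - (χ i - lam)⁻¹ : ℝ) = g i := by
    simp [g]
  rw [← hreal]
  have : (0 : ℝ) ≤ (χ i - lam')⁻¹ - (χ i - lam)⁻¹ := by
    set a : ℝ := χ i - lam
    set b : ℝ := χ i - lam'
    have ha : a ≠ 0 := sub_ne_zero.mpr (hne i)
    have hb : b ≠ 0 := sub_ne_zero.mpr (hne' i)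
    have hid : b⁻¹ - a⁻¹ = (a - b) * (a * b)⁻¹ := by
      rw [mul_inv, sub_mul, mul_comm a⁻¹ b⁻¹, ← mul_assoc, ← mul_assoc,
        mul_inv_cancel₀ hb, one_mul, mul_comm a b⁻¹, mul_assoc,
        mul_inv_cancel₀ ha, mul_one]
    have hab : 0 < a * b := by
      rcases hspec i with h | h
      · exact mul_pos_of_neg_of_neg (by simp [a]; linarith) (by simp [b]; linarith)
      · exact mul_pos (by simp [a]; linarith) (by simp [b]; linarith)
    have hamb : 0 ≤ a - b := by simp [a, b]; linarith
    rw [hid]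
    exact mul_nonneg hamb (le_of_lt (inv_pos.mpr hab))
  exact_mod_cast this
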